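/- Let T be a locally finite tree, ∞ an end of T, H∞ a horoball centered at ∞ with associated Hamenstädt distance d_∞ on ∂T − {∞}. For another end r ≠ ∞ and a horoball H_r centered at r disjoint from H∞, set D(r) = d(H∞, H_r), and for s ≥ 0 let H_r(s) be the horoball contained in H_r whose boundary is at distance s from ∂H_r. Then for ξ ∈ ∂T − {∞}, ξ belongs to the shadow O_∞ H_r(s) if and only if d_∞(ξ, r) ≤ e^{−(D(r)+s)}. -/

import Mathlib

open scoped Classical

/-- `c` is a geodesic ray in the graph `G`; it defines an end of the tree. -/
def IsGeodesicRay {V : Type*} (G : SimpleGraph V) (c : ℕ → V) : Prop :=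
  ∀ m n : ℕ, G.dist (c m) (c n) = Nat.dist m n

/-- `ℓ` is a (bi-infinite) geodesic line: an isometric embedding of `ℤ`. -/
def IsGeodesicLine {V : Type*} (G : SimpleGraph V) (ℓ : ℤ → V) : Prop :=
  ∀ m n : ℤ, G.dist (ℓ m) (ℓ n) = (m - n).natAbs

/-- Busemann function of the end determined by the ray `c`; horoballs centered at this
end are the sets `{x | t ≤ busemann G c x}`. -/
noncomputable def busemann {V : Type*} (G : SimpleGraph V) (c : ℕ → V) (x : V) : ℤ :=
  sSup {m : ℤ | ∃ n : ℕ, m = (n : ℤ) - (G.dist x (c n) : ℤ)}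

/-- The negative end of the geodesic line `ℓ` is the end `∞` of the ray `c`. -/
def NegEndIs {V : Type*} (ℓ : ℤ → V) (c : ℕ → V) : Prop :=
  ∃ a : ℤ, ∃ b : ℕ, ∀ n : ℕ, ℓ (a - n) = c (b + n)

/-- The Hamenstädt distance associated to the horoball `H∞` between two points of
`∂T − {∞}`, represented by geodesic lines from `∞` normalized so that they cross the
horosphere `∂H∞` at time `0`. -/
noncomputable def hamDist {V : Type*} (ℓ ℓ' : ℤ → V) : ℝ :=
  if ℓ = ℓ' then 0
  else Real.exp (-((sSup {n : ℤ | ∀ k ≤ n, ℓ k = ℓ' k} : ℤ) : ℝ))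

section Aux

variable {V : Type*} {G : SimpleGraph V}

private lemma line_adj {ℓ : ℤ → V} (hℓ : IsGeodesicLine G ℓ) (j : ℤ) :
    G.Adj (ℓ j) (ℓ (j + 1)) := by
  rw [← SimpleGraph.dist_eq_one_iff_adj, hℓ j (j + 1)]
  omega

private noncomputable def seg (ℓ : ℤ → V) (hℓ : IsGeodesicLine G ℓ) :
    (p : ℤ) → (k : ℕ) → G.Walk (ℓ p) (ℓ (p + k))
  | p, 0 => SimpleGraph.Walk.nil.copy rfl (congrArg ℓ (by push_cast; ring))
  | p, (k+1) => (SimpleGraph.Walk.cons (line_adj hℓ p) (seg ℓ hℓ (p+1) k)).copy rfl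
      (congrArg ℓ (by push_cast; ring))

private lemma seg_length (ℓ : ℤ → V) (hℓ : IsGeodesicLine G ℓ) :
    ∀ (p : ℤ) (k : ℕ), (seg ℓ hℓ p k).length = k
  | p, 0 => by simp [seg]
  | p, (k+1) => by simp [seg, seg_length ℓ hℓ (p+1) k]

private lemma seg_isPath (ℓ : ℤ → V) (hℓ : IsGeodesicLine G ℓ) (p : ℤ) (k : ℕ) :
    (seg ℓ hℓ p k).IsPath := by
  apply SimpleGraph.Walk.isPath_of_length_eq_dist
  rw [seg_length, hℓ p (p + k)]
  omega

private lemma seg_support (ℓ : ℤ → V) (hℓ : IsGeodesicLine G ℓ) :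
    ∀ (p : ℤ) (k : ℕ),
      (seg ℓ hℓ p k).support = (List.range (k+1)).map (fun j : ℕ => ℓ (p + j))
  | p, 0 => by simp [seg, List.range_succ]
  | p, (k+1) => by
      simp only [seg, SimpleGraph.Walk.support_copy, SimpleGraph.Walk.support_cons,
        seg_support ℓ hℓ (p+1) k]
      conv_rhs => rw [List.range_succ_eq_map]
      rw [List.map_cons, List.map_map]
      congr 1
      · simp
      apply List.map_congr_left
      intro x _
      simp only [Function.comp_apply]
      congr 1
      push_cast
      ring

private lemma seg_getVert_one (ℓ : ℤ → V) (hℓ : IsGeodesicLine G ℓ) (p : ℤ) (k : ℕ)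
    (hk : 1 ≤ k) : (seg ℓ hℓ p k).getVert 1 = ℓ (p + 1) := by
  obtain ⟨k', rfl⟩ : ∃ k', k = k' + 1 := ⟨k - 1, by omega⟩
  simp [seg, SimpleGraph.Walk.getVert_copy, SimpleGraph.Walk.getVert_cons_succ, SimpleGraph.Walk.getVert_cons (hn := one_ne_zero)]

private lemma dist_of_path (hT : G.IsTree) {u v : V} (W : G.Walk u v) (hW : W.IsPath) :
    G.dist u v = W.length := by
  obtain ⟨p, hp, hl⟩ := hT.isConnected.exists_path_of_dist u v
  obtain ⟨q, hq, huniq⟩ := hT.existsUnique_path u v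
  rw [← hl, huniq p hp, huniq W hW]

private lemma branch_ne (hT : G.IsTree) {ℓ ℓr : ℤ → V} (hℓ : IsGeodesicLine G ℓ)
    (hℓr : IsGeodesicLine G ℓr) {M : ℤ} (hMeq : ℓ M = ℓr M)
    (hne : ℓ (M + 1) ≠ ℓr (M + 1)) (j i : ℕ) (hi : 1 ≤ i) :
    ℓ (M + j) ≠ ℓr (M + i) := by
  intro heq
  have h1 : (seg ℓ hℓ M j).IsPath := seg_isPath ℓ hℓ M j
  have h2 : ((seg ℓr hℓr M i).copy hMeq.symm heq.symm).IsPath := by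
    simpa using seg_isPath ℓr hℓr M i
  obtain ⟨q, hq, huniq⟩ := hT.existsUnique_path (ℓ M) (ℓ (M + (j : ℤ)))
  have hPQ : seg ℓ hℓ M j = (seg ℓr hℓr M i).copy hMeq.symm heq.symm :=
    (huniq _ h1).trans (huniq _ h2).symm
  rcases Nat.eq_zero_or_pos j with hj | hj
  · subst hj
    have h0 : ℓr M = ℓr (M + i) := by
      rw [← hMeq, ← heq]; norm_num
    have := hℓr M (M + i)
    rw [← h0, SimpleGraph.dist_self] at this
    omega
  · have g1 : (seg ℓ hℓ M j).getVert 1 = ℓ (M + 1) := seg_getVert_one ℓ hℓ M j hj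
    have g2 : ((seg ℓr hℓr M i).copy hMeq.symm heq.symm).getVert 1 = ℓr (M + 1) := by
      rw [SimpleGraph.Walk.getVert_copy]
      exact seg_getVert_one ℓr hℓr M i hi
    exact hne (by rw [← g1, hPQ, g2])

private lemma dist_branch (hT : G.IsTree) {ℓ ℓr : ℤ → V} (hℓ : IsGeodesicLine G ℓ)
    (hℓr : IsGeodesicLine G ℓr) {M : ℤ} (hMeq : ℓ M = ℓr M)
    (hne : ℓ (M + 1) ≠ ℓr (M + 1)) (n m : ℤ) (hn : M ≤ n) (hm : M ≤ m) :
    (G.dist (ℓ n) (ℓr m) : ℤ) = (n - M) + (m - M) := by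
  obtain ⟨j, rfl⟩ : ∃ j : ℕ, n = M + j := ⟨(n - M).toNat, by omega⟩
  obtain ⟨i, rfl⟩ : ∃ i : ℕ, m = M + i := ⟨(m - M).toNat, by omega⟩
  suffices h : G.dist (ℓ (M + j)) (ℓr (M + i)) = j + i by rw [h]; push_cast; ring
  have hW2 : ((seg ℓr hℓr M i).copy hMeq.symm rfl : G.Walk (ℓ M) (ℓr (M + i))) =
      (seg ℓr hℓr M i).copy hMeq.symm rfl := rfl
  set W : G.Walk (ℓ (M + (j:ℤ))) (ℓr (M + (i:ℤ))) :=
    (seg ℓ hℓ M j).reverse.append ((seg ℓr hℓr M i).copy hMeq.symm rfl) with hWdef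
  have hlen : W.length = j + i := by
    simp [W, seg_length]
  have hpath : W.IsPath := by
    rw [SimpleGraph.Walk.isPath_def, hWdef, SimpleGraph.Walk.support_append]
    apply List.Nodup.append
    · exact ((seg_isPath ℓ hℓ M j).reverse).support_nodup
    · apply List.Nodup.sublist (List.tail_sublist _)
      simpa using (seg_isPath ℓr hℓr M i).support_nodup
    · intro x hx1 hx2
      rw [SimpleGraph.Walk.support_reverse, List.mem_reverse, seg_support] at hx1
      obtain ⟨j', hj', rfl⟩ := List.mem_map.mp hx1
      rw [List.mem_range] at hj'
      rw [SimpleGraph.Walk.support_copy, seg_support, List.range_succ_eq_map,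
        List.map_cons, List.tail_cons, List.map_map] at hx2
      obtain ⟨i', hi', heq⟩ := List.mem_map.mp hx2
      rw [List.mem_range] at hi'
      have : ℓ (M + (j' : ℤ)) = ℓr (M + ((i' + 1 : ℕ) : ℤ)) := by
        rw [← heq]
        simp only [Function.comp_apply]
      exact branch_ne hT hℓ hℓr hMeq hne j' (i' + 1) (by omega) this
  rw [dist_of_path hT W hpath, hlen]

private lemma busemann_eq (c : ℕ → V) (x : V) (v : ℤ)
    (hub : ∀ n : ℕ, (n : ℤ) - (G.dist x (c n) : ℤ) ≤ v)
    (hmem : ∃ n : ℕ, (n : ℤ) - (G.dist x (c n) : ℤ) = v) :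
    busemann G c x = v := by
  unfold busemann
  apply le_antisymm
  · apply csSup_le
    · exact ⟨((0:ℕ):ℤ) - (G.dist x (c 0) : ℤ), 0, rfl⟩
    · rintro m ⟨n, rfl⟩
      exact hub n
  · obtain ⟨n, hn⟩ := hmem
    have : ((n : ℤ) - (G.dist x (c n) : ℤ)) ≤ sSup {m : ℤ | ∃ n : ℕ, m = (n : ℤ) - (G.dist x (c n) : ℤ)} := by
      apply le_csSup
      · exact ⟨v, by rintro m ⟨n', rfl⟩; exact hub n'⟩
      · exact ⟨n, rfl⟩
    omega

private lemma busemann_neg_end (hconn : G.Connected) {c : ℕ → V} (hc : IsGeodesicRay G c)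
    {ℓ : ℤ → V} (hℓ : IsGeodesicLine G ℓ) {a : ℤ} {b : ℕ}
    (hab : ∀ n : ℕ, ℓ (a - n) = c (b + n)) (k : ℤ) :
    busemann G c (ℓ k) = (b : ℤ) + a - k := by
  have hval : ∀ n : ℕ, b + (a - k).toNat ≤ n →
      (n : ℤ) - (G.dist (ℓ k) (c n) : ℤ) = (b : ℤ) + a - k := by
    intro n hn
    obtain ⟨n', rfl⟩ : ∃ n' : ℕ, n = b + n' := ⟨n - b, by omega⟩
    rw [← hab n', hℓ k (a - n')]
    omega
  have hmono : Monotone (fun n : ℕ => (n : ℤ) - (G.dist (ℓ k) (c n) : ℤ)) := by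
    apply monotone_nat_of_le_succ
    intro n
    have htri : G.dist (ℓ k) (c (n+1)) ≤ G.dist (ℓ k) (c n) + G.dist (c n) (c (n+1)) :=
      hconn.dist_triangle
    have h1 : G.dist (c n) (c (n+1)) = 1 := by rw [hc n (n+1)]; simp [Nat.dist]
    show (n : ℤ) - (G.dist (ℓ k) (c n) : ℤ) ≤ ((n+1 : ℕ) : ℤ) - (G.dist (ℓ k) (c (n+1)) : ℤ)
    omega
  apply busemann_eq
  · intro n
    calc (n : ℤ) - (G.dist (ℓ k) (c n) : ℤ)
        ≤ ((n + (b + (a - k).toNat) : ℕ) : ℤ) - (G.dist (ℓ k) (c (n + (b + (a - k).toNat))) : ℤ) :=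
          hmono (Nat.le_add_right _ _)
      _ = (b : ℤ) + a - k := hval _ (by omega)
  · exact ⟨b + (a - k).toNat, hval _ le_rfl⟩

end Aux

/-- Shadow computation. `∞` is the end of the ray `c`, with horoball
`H∞ = {x | t ≤ busemann c x}`. The end `r ≠ ∞` is the positive end of the normalized
geodesic line `ℓr` from `∞` (crossing `∂H∞` at `ℓr 0`); the horoball `H_r` centered
at `r` is `{x | u ≤ busemann c_r x}` for the ray `c_r = ℓr|ℕ`, so that it is disjoint
from `H∞` with `D(r) = d(H∞, H_r) = u`, and `H_r(s)` is the horoball at further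
distance `s` inside `H_r`. A point `ξ ∈ ∂T − {∞}` (positive end of a normalized line
`ℓ` from `∞`) lies in the shadow `O_∞ H_r(s)` (i.e. `ℓ` meets `H_r(s)`) if and only if
`d_∞(ξ, r) ≤ e^{-(D(r)+s)}`. -/
theorem stmt14 {V : Type*} (G : SimpleGraph V) (hT : G.IsTree)
    (hlf : ∀ v : V, (G.neighborSet v).Finite)
    (c : ℕ → V) (hc : IsGeodesicRay G c) (t : ℤ)
    (ℓr : ℤ → V) (hℓr : IsGeodesicLine G ℓr) (hnr : NegEndIs ℓr c)
    (hbr : busemann G c (ℓr 0) = t)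
    (u s : ℕ)
    (ℓ : ℤ → V) (hℓ : IsGeodesicLine G ℓ) (hn : NegEndIs ℓ c)
    (hb : busemann G c (ℓ 0) = t) :
    (∃ n : ℤ, ((u + s : ℕ) : ℤ) ≤ busemann G (fun m : ℕ => ℓr (m : ℤ)) (ℓ n)) ↔
      hamDist ℓ ℓr ≤ Real.exp (-((u + s : ℕ) : ℝ)) := by
  classical
  set N : ℕ := u + s with hNdef
  obtain ⟨a, b, hab⟩ := hn
  obtain ⟨a', b', hab'⟩ := hnr
  have hconn := hT.isConnected
  have hba : (b : ℤ) + a = t := by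
    have := busemann_neg_end hconn hc hℓ hab 0
    omega
  have hba' : (b' : ℤ) + a' = t := by
    have := busemann_neg_end hconn hc hℓr hab' 0
    omega
  by_cases hEq : ℓ = ℓr
  · subst hEq
    constructor
    · intro _
      rw [hamDist, if_pos rfl]
      exact (Real.exp_pos _).le
    · intro _
      refine ⟨(N : ℤ), ?_⟩
      have hbus : busemann G (fun m : ℕ => ℓ (m : ℤ)) (ℓ (N : ℤ)) = (N : ℤ) := by
        apply busemann_eq
        · intro n
          show (n : ℤ) - (G.dist (ℓ (N : ℤ)) (ℓ (n : ℤ)) : ℤ) ≤ (N : ℤ)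
          rw [hℓ]
          omega
        · refine ⟨N, ?_⟩
          show (N : ℤ) - (G.dist (ℓ (N : ℤ)) (ℓ (N : ℤ)) : ℤ) = (N : ℤ)
          rw [hℓ]
          omega
      rw [hbus]
  · have hS : ∀ k : ℤ, k ≤ min a a' → ℓ k = ℓr k := by
      intro k hk
      have h1 : ℓ k = c (b + (a - k).toNat) := by
        have := hab (a - k).toNat
        rw [show a - ((a - k).toNat : ℤ) = k by omega] at this
        exact this
      have h2 : ℓr k = c (b' + (a' - k).toNat) := by
        have := hab' (a' - k).toNat
        rw [show a' - ((a' - k).toNat : ℤ) = k by omega] at this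
        exact this
      rw [h1, h2]
      congr 1
      omega
    obtain ⟨j₀, hj₀⟩ : ∃ j₀ : ℤ, ℓ j₀ ≠ ℓr j₀ := by
      by_contra h
      push_neg at h
      exact hEq (funext h)
    set S : Set ℤ := {n : ℤ | ∀ k ≤ n, ℓ k = ℓr k} with hSdef
    have hSne : S.Nonempty := ⟨min a a', fun k hk => hS k hk⟩
    have hSbdd : BddAbove S := by
      refine ⟨j₀, ?_⟩
      intro n hn
      by_contra hcon
      push_neg at hcon
      exact hj₀ (hn j₀ (le_of_lt hcon))
    set M : ℤ := sSup S with hMdef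
    have hM : M ∈ S := Int.csSup_mem hSne hSbdd
    have hag : ∀ k ≤ M, ℓ k = ℓr k := hM
    have hMeq : ℓ M = ℓr M := hag M le_rfl
    have hMne : ℓ (M + 1) ≠ ℓr (M + 1) := by
      intro hcon
      have hmem : M + 1 ∈ S := by
        intro k hk
        rcases lt_or_eq_of_le hk with h | h
        · exact hag k (by omega)
        · rw [h]; exact hcon
      have := le_csSup hSbdd hmem
      omega
    have hd : ∀ n : ℤ, M ≤ n → ∀ m : ℕ, (G.dist (ℓ n) (ℓr (m : ℤ)) : ℤ)
        = (n - M) + (((m : ℤ) - M).natAbs : ℤ) := by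
      intro n hn m
      by_cases hm : M ≤ (m : ℤ)
      · rw [dist_branch hT hℓ hℓr hMeq hMne n m hn hm]; omega
      · rw [show ℓr (m : ℤ) = ℓ (m : ℤ) from (hag _ (by omega)).symm, hℓ n m]
        omega
    have hBhigh : ∀ n : ℤ, M ≤ n →
        busemann G (fun m : ℕ => ℓr (m : ℤ)) (ℓ n) = 2 * M - n := by
      intro n hn
      apply busemann_eq
      · intro m
        show (m : ℤ) - (G.dist (ℓ n) (ℓr (m : ℤ)) : ℤ) ≤ 2 * M - n
        rw [hd n hn m]
        omega
      · refine ⟨M.toNat, ?_⟩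
        show ((M.toNat : ℕ) : ℤ) - (G.dist (ℓ n) (ℓr ((M.toNat : ℕ) : ℤ)) : ℤ) = 2 * M - n
        rw [hd n hn M.toNat]
        omega
    have hBlow : ∀ n : ℤ, n ≤ M →
        busemann G (fun m : ℕ => ℓr (m : ℤ)) (ℓ n) = n := by
      intro n hn
      rw [hag n hn]
      apply busemann_eq
      · intro m
        show (m : ℤ) - (G.dist (ℓr n) (ℓr (m : ℤ)) : ℤ) ≤ n
        rw [hℓr]
        omega
      · refine ⟨n.toNat, ?_⟩
        show ((n.toNat : ℕ) : ℤ) - (G.dist (ℓr n) (ℓr ((n.toNat : ℕ) : ℤ)) : ℤ) = n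
        rw [hℓr]
        omega
    have key : (∃ n : ℤ, (N : ℤ) ≤ busemann G (fun m : ℕ => ℓr (m : ℤ)) (ℓ n)) ↔
        (N : ℤ) ≤ M := by
      constructor
      · rintro ⟨n, hn⟩
        rcases le_total n M with h | h
        · rw [hBlow n h] at hn; omega
        · rw [hBhigh n h] at hn; omega
      · intro h
        exact ⟨M, by rw [hBhigh M le_rfl]; omega⟩
    rw [key, hamDist, if_neg hEq, ← hSdef, ← hMdef, Real.exp_le_exp, neg_le_neg_iff]
    constructor <;> intro h <;> exact_mod_cast h
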